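/- Let d ≥ 1, and let σ₁, ..., σ_d be positive real numbers. Then ((Σ_{i=1}^d σ_i)/d)^{d-1} ≥ (∏_{i=1}^d σ_i) · (Σ_{i=1}^d 1/σ_i)/d. -/

import Mathlib

open Finset

lemma stmt5_aux {ι : Type*} [DecidableEq ι] :
    ∀ (n : ℕ) (s : Finset ι), s.card = n → ∀ (σ : ι → ℝ), (∀ i ∈ s, 0 < σ i) →
      (∏ i ∈ s, σ i) * (∑ i ∈ s, 1 / σ i) ≤
        (s.card : ℝ) * ((∑ i ∈ s, σ i) / (s.card : ℝ)) ^ (s.card - 1) := by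
  intro n
  induction n with
  | zero =>
    intro s hc σ hpos
    rw [Finset.card_eq_zero.mp hc]
    simp
  | succ k ih =>
    intro s hc σ hpos
    cases k with
    | zero =>
      obtain ⟨a, rfl⟩ := Finset.card_eq_one.mp hc
      have ha : σ a ≠ 0 := (hpos a (mem_singleton_self a)).ne'
      simp [ha]
    | succ j =>
      have hne : s.Nonempty := card_pos.mp (by rw [hc]; omega)
      obtain ⟨i, hi, hmax⟩ := s.exists_max_image σ hne
      set t := s.erase i with ht
      have hct : t.card = j + 1 := by rw [ht, card_erase_of_mem hi, hc]; omega
      have hts : ∀ b ∈ t, 0 < σ b := fun b hb => hpos b (mem_of_mem_erase hb)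
      have htne : t.Nonempty := card_pos.mp (by rw [hct]; omega)
      set x := σ i with hxdef
      set S := ∑ b ∈ t, σ b with hSdef
      set P := ∏ b ∈ t, σ b with hPdef
      set T := ∑ b ∈ t, 1 / σ b with hTdef
      have hx : 0 < x := hpos i hi
      have hS : 0 < S := Finset.sum_pos hts htne
      have hP : 0 < P := Finset.prod_pos hts
      set m : ℝ := S / ((j : ℝ) + 1) with hmdef
      have hj1 : (0:ℝ) < (j:ℝ) + 1 := by positivity
      have hm : 0 < m := div_pos hS hj1
      have hSm : S = ((j:ℝ) + 1) * m := by rw [hmdef]; field_simp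
      -- x is at least the mean of the others
      have hxm : m ≤ x := by
        have hsum : S ≤ ((j:ℝ) + 1) * x := by
          have := Finset.sum_le_card_nsmul t σ x (fun b hb => hmax b (mem_of_mem_erase hb))
          rw [hct] at this
          push_cast at this ⊢
          simpa [nsmul_eq_mul] using this
        rw [hmdef, div_le_iff₀ hj1]
        linarith [mul_comm x ((j:ℝ)+1)]
      -- induction hypothesis
      have hIH : P * T ≤ ((j:ℝ) + 1) * m ^ j := by
        have := ih t hct σ hts
        rw [hct] at this
        simp only [Nat.add_sub_cancel] at this
        push_cast at this
        exact this
      -- AM-HM via Cauchy-Schwarz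
      have hcs : (((j:ℝ) + 1)) ^ 2 ≤ S * T := by
        have h := Finset.sum_mul_sq_le_sq_mul_sq t (fun b => Real.sqrt (σ b))
          (fun b => 1 / Real.sqrt (σ b))
        have h1 : ∀ b ∈ t, Real.sqrt (σ b) * (1 / Real.sqrt (σ b)) = 1 := by
          intro b hb
          have : Real.sqrt (σ b) ≠ 0 := (Real.sqrt_pos.mpr (hts b hb)).ne'
          field_simp
        have h2 : ∀ b ∈ t, Real.sqrt (σ b) ^ 2 = σ b := fun b hb =>
          Real.sq_sqrt (hts b hb).le
        have h3 : ∀ b ∈ t, (1 / Real.sqrt (σ b)) ^ 2 = 1 / σ b := by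
          intro b hb
          rw [div_pow, one_pow, Real.sq_sqrt (hts b hb).le]
        rw [Finset.sum_congr rfl h1, Finset.sum_congr rfl h2, Finset.sum_congr rfl h3] at h
        have hone : ∑ _b ∈ t, (1:ℝ) = ((j:ℝ) + 1) := by
          rw [Finset.sum_const, hct]; push_cast; ring
        rw [hone] at h
        exact h
      have hT : ((j:ℝ) + 1) / m ≤ T := by
        rw [div_le_iff₀ hm]
        have : ((j:ℝ)+1)/m = ((j:ℝ)+1)^2 / S := by
          rw [hSm]; field_simp
        nlinarith [hcs, hS, hm]
      -- AM-GM consequence : P ≤ m ^ (j+1)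
      have hPm : P ≤ m ^ (j + 1) := by
        have h1 : P * (((j:ℝ) + 1) / m) ≤ P * T :=
          mul_le_mul_of_nonneg_left hT hP.le
        have h2 : P * (((j:ℝ) + 1) / m) ≤ ((j:ℝ) + 1) * m ^ j := h1.trans hIH
        have h3 : P * ((j:ℝ) + 1) ≤ ((j:ℝ) + 1) * m ^ j * m := by
          have := mul_le_mul_of_nonneg_right h2 hm.le
          calc P * ((j:ℝ) + 1) = P * (((j:ℝ) + 1) / m) * m := by field_simp
            _ ≤ ((j:ℝ) + 1) * m ^ j * m := this
        rw [pow_succ]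
        nlinarith [h3, hj1]
      -- Bernoulli step
      have key : m ^ (j + 1) + ((j:ℝ) + 1) * m ^ j * x ≤
          ((j:ℝ) + 2) * ((S + x) / ((j:ℝ) + 2)) ^ (j + 1) := by
        set u : ℝ := (x - m) / (((j:ℝ) + 2) * m) with hudef
        have hu0 : 0 ≤ u := div_nonneg (by linarith) (by positivity)
        have hb : 1 + ((j:ℝ) + 1) * u ≤ (1 + u) ^ (j + 1) := by
          have := one_add_mul_le_pow (by linarith : (-2:ℝ) ≤ u) (j + 1)
          push_cast at this
          linarith
        have heq : (S + x) / ((j:ℝ) + 2) = m * (1 + u) := by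
          rw [hudef, hSm]; field_simp; ring
        rw [heq, mul_pow]
        calc m ^ (j + 1) + ((j:ℝ) + 1) * m ^ j * x
            = ((j:ℝ) + 2) * m ^ (j + 1) * (1 + ((j:ℝ) + 1) * u) := by
              rw [hudef, pow_succ]; field_simp; ring
          _ ≤ ((j:ℝ) + 2) * m ^ (j + 1) * (1 + u) ^ (j + 1) := by
              apply mul_le_mul_of_nonneg_left hb (by positivity)
          _ = ((j:ℝ) + 2) * (m ^ (j + 1) * (1 + u) ^ (j + 1)) := by ring
      -- assemble
      have hPs : ∏ b ∈ s, σ b = x * P := (Finset.mul_prod_erase s σ hi).symm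
      have hTs : ∑ b ∈ s, 1 / σ b = 1 / x + T :=
        (Finset.add_sum_erase s (fun b => 1 / σ b) hi).symm
      have hSs : ∑ b ∈ s, σ b = x + S := (Finset.add_sum_erase s σ hi).symm
      rw [hPs, hTs, hSs, hc]
      have hcast : ((j + 1 + 1 : ℕ) : ℝ) = (j:ℝ) + 2 := by push_cast; ring
      rw [hcast]
      have hexp : j + 1 + 1 - 1 = j + 1 := rfl
      rw [hexp]
      have hlhs : x * P * (1 / x + T) = P + P * T * x := by
        field_simp
      rw [hlhs]
      have h1 : P * T * x ≤ ((j:ℝ) + 1) * m ^ j * x :=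
        mul_le_mul_of_nonneg_right hIH hx.le
      have h2 : (x + S) = (S + x) := by ring
      rw [h2]
      linarith [hPm, h1, key]

/-- For positive reals `σ₁, …, σ_d` (`d ≥ 1`),
`((∑ σᵢ)/d)^(d-1) ≥ (∏ σᵢ) · (∑ 1/σᵢ)/d`. -/
theorem stmt5 (d : ℕ) (hd : 1 ≤ d) (σ : Fin d → ℝ)
    (hpos : ∀ i, 0 < σ i) :
    ((∑ i, σ i) / d) ^ (d - 1) ≥ (∏ i, σ i) * ((∑ i, 1 / σ i) / d) := by
  have hcard : (Finset.univ : Finset (Fin d)).card = d := by simp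
  have h := stmt5_aux d (Finset.univ : Finset (Fin d)) hcard σ (fun i _ => hpos i)
  rw [hcard] at h
  have hd0 : (0:ℝ) < (d:ℝ) := by exact_mod_cast hd
  rw [ge_iff_le, mul_div_assoc'] at *
  rw [div_le_iff₀ hd0]
  linarith [h]
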